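/- Under the assumptions $\Pro(g(i)=j)=1/N$ and $\Pro(g(i_1)=j_1,g(i_2)=j_2)\le C_G/N^2$ for distinct pairs, with $X_m$ counting intersections of the graph of $g$ with the positions of the $m$ largest entries (with respect to a fixed ordering $h$), one has for all $1 \le m \le nN$: $\Pro(X_m \ge 1) \ge \min\{\tfrac{m}{2N}, \tfrac{1}{2C_G}\} \cdot \Pro(X_{\ell N} \ge 1)$, and for all $k,m$ with $2kN \le m \le nN$: $\Pro(X_m \ge k) \ge \frac{1}{2+4C_G}\Pro(X_{\ell N} \ge k)$. -/

import Mathlib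

open Finset

private def Xc (n N m : ℕ) (h : Fin (n * N) ≃ Fin n × Fin N) (g : Fin n → Fin N) : ℕ :=
  (Finset.univ.filter fun j : Fin (n * N) => j.val < m ∧ g (h j).1 = (h j).2).card

private lemma Pm_card (K m : ℕ) (hm : m ≤ K) :
    (Finset.univ.filter fun j : Fin K => j.val < m).card = m := by
  have : (Finset.univ.filter fun j : Fin K => j.val < m)
      = Finset.map (Fin.castLEEmb hm) Finset.univ := by
    ext j
    simp only [mem_filter, mem_univ, true_and, mem_map, Fin.castLEEmb_apply]
    constructor
    · intro hj; exact ⟨⟨j.val, hj⟩, Fin.ext rfl⟩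
    · rintro ⟨a, rfl⟩
      exact a.isLt
  rw [this, Finset.card_map, Finset.card_univ, Fintype.card_fin]

private lemma ite_ge (x : ℕ) : (3 * (x:ℝ) - (x:ℝ)^2) / 2 ≤ (if 1 ≤ x then (1:ℝ) else 0) := by
  match x with
  | 0 => norm_num
  | 1 => norm_num
  | (x+2) =>
    rw [if_pos (by omega)]
    push_cast
    nlinarith [sq_nonneg ((x:ℝ)), Nat.cast_nonneg (α := ℝ) x]

private lemma Xc_sum (n N m : ℕ) (h : Fin (n * N) ≃ Fin n × Fin N) (g : Fin n → Fin N) :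
    (Xc n N m h g : ℝ) = ∑ j ∈ Finset.univ.filter (fun j : Fin (n * N) => j.val < m),
      (if g (h j).1 = (h j).2 then (1:ℝ) else 0) := by
  rw [Finset.sum_boole, Finset.filter_filter, Xc]

private lemma momentA {n N : ℕ} {G : Finset (Fin n → Fin N)}
    (h : Fin (n * N) ≃ Fin n × Fin N)
    (h1 : ∀ i j, ((G.filter fun g => g i = j).card : ℝ) * N = G.card)
    {m : ℕ} (hm : m ≤ n * N) :
    (∑ g ∈ G, (Xc n N m h g : ℝ)) * N = m * G.card := by
  simp only [Xc_sum]
  rw [Finset.sum_comm, Finset.sum_mul]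
  have : ∀ j ∈ Finset.univ.filter (fun j : Fin (n * N) => j.val < m),
      (∑ g ∈ G, if g (h j).1 = (h j).2 then (1:ℝ) else 0) * N = (G.card : ℝ) := by
    intro j _
    rw [Finset.sum_boole]
    exact h1 _ _
  rw [Finset.sum_congr rfl this, Finset.sum_const, Pm_card _ _ hm, nsmul_eq_mul]

private lemma iteMulIte (a b : Prop) [Decidable a] [Decidable b] :
    (if a then (1:ℝ) else 0) * (if b then (1:ℝ) else 0) = if a ∧ b then (1:ℝ) else 0 := by
  split_ifs with h1 h2 h3 <;> simp_all

private lemma momentB {n N : ℕ} {G : Finset (Fin n → Fin N)} {C : ℝ}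
    (h : Fin (n * N) ≃ Fin n × Fin N)
    (h1 : ∀ i j, ((G.filter fun g => g i = j).card : ℝ) * N = G.card)
    (h2 : ∀ p q : Fin n × Fin N, p ≠ q →
      ((G.filter fun g => g p.1 = p.2 ∧ g q.1 = q.2).card : ℝ) * N ^ 2 ≤ C * G.card)
    {m : ℕ} (hm1 : 1 ≤ m) (hm : m ≤ n * N) :
    (∑ g ∈ G, (Xc n N m h g : ℝ)^2) * N^2
      ≤ (m : ℝ) * G.card * N + C * m * ((m:ℝ) - 1) * G.card := by
  classical
  have key : ∀ g ∈ G, (Xc n N m h g : ℝ)^2 = (Xc n N m h g : ℝ)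
      + ∑ j ∈ Finset.univ.filter (fun j : Fin (n * N) => j.val < m),
        ∑ j' ∈ (Finset.univ.filter (fun j : Fin (n * N) => j.val < m)).erase j,
        (if g (h j).1 = (h j).2 ∧ g (h j').1 = (h j').2 then (1:ℝ) else 0) := by
    intro g _
    rw [Xc_sum, sq, Finset.sum_mul_sum, ← Finset.sum_add_distrib]
    refine Finset.sum_congr rfl (fun j hj => ?_)
    rw [← Finset.add_sum_erase _
      (fun j' => (if g (h j).1 = (h j).2 then (1:ℝ) else 0) *
        (if g (h j').1 = (h j').2 then (1:ℝ) else 0)) hj]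
    congr 1
    · split_ifs <;> simp
    · exact Finset.sum_congr rfl fun j' _ => iteMulIte _ _
  rw [Finset.sum_congr rfl key, Finset.sum_add_distrib, add_mul]
  have hA := momentA h h1 hm
  have e1 : (∑ g ∈ G, (Xc n N m h g : ℝ)) * N ^ 2 = (m : ℝ) * G.card * N := by
    rw [sq, ← mul_assoc, hA]
  rw [e1]
  have hD : (∑ g ∈ G, ∑ j ∈ Finset.univ.filter (fun j : Fin (n * N) => j.val < m),
        ∑ j' ∈ (Finset.univ.filter (fun j : Fin (n * N) => j.val < m)).erase j,
        (if g (h j).1 = (h j).2 ∧ g (h j').1 = (h j').2 then (1:ℝ) else 0)) * N^2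
      ≤ C * m * ((m:ℝ) - 1) * G.card := by
    rw [Finset.sum_comm]
    have step : ∀ j ∈ Finset.univ.filter (fun j : Fin (n * N) => j.val < m),
        (∑ g ∈ G, ∑ j' ∈ (Finset.univ.filter (fun j : Fin (n * N) => j.val < m)).erase j,
          (if g (h j).1 = (h j).2 ∧ g (h j').1 = (h j').2 then (1:ℝ) else 0))
        = ∑ j' ∈ (Finset.univ.filter (fun j : Fin (n * N) => j.val < m)).erase j,
            ((G.filter fun g => g (h j).1 = (h j).2 ∧ g (h j').1 = (h j').2).card : ℝ) := by
      intro j _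
      rw [Finset.sum_comm]
      exact Finset.sum_congr rfl fun j' _ => Finset.sum_boole _ _
    rw [Finset.sum_congr rfl step, Finset.sum_mul]
    have bnd : ∀ j ∈ Finset.univ.filter (fun j : Fin (n * N) => j.val < m),
        (∑ j' ∈ (Finset.univ.filter (fun j : Fin (n * N) => j.val < m)).erase j,
            ((G.filter fun g => g (h j).1 = (h j).2 ∧ g (h j').1 = (h j').2).card : ℝ)) * N^2
        ≤ ((m:ℝ) - 1) * (C * G.card) := by
      intro j hj
      rw [Finset.sum_mul]
      have : ∀ j' ∈ (Finset.univ.filter (fun j : Fin (n * N) => j.val < m)).erase j,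
          ((G.filter fun g => g (h j).1 = (h j).2 ∧ g (h j').1 = (h j').2).card : ℝ) * N^2
          ≤ C * G.card := by
        intro j' hj'
        have hne : h j ≠ h j' := fun hcontra =>
          (Finset.ne_of_mem_erase hj') (h.injective hcontra).symm
        exact h2 (h j) (h j') hne
      calc _ ≤ ∑ _j' ∈ (Finset.univ.filter (fun j : Fin (n * N) => j.val < m)).erase j,
            C * (G.card:ℝ) := Finset.sum_le_sum this
        _ = ((m:ℝ) - 1) * (C * G.card) := by
            rw [Finset.sum_const, Finset.card_erase_of_mem hj, Pm_card _ _ hm, nsmul_eq_mul,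
              Nat.cast_sub hm1, Nat.cast_one]
    calc _ ≤ ∑ _j ∈ Finset.univ.filter (fun j : Fin (n * N) => j.val < m),
          ((m:ℝ) - 1) * (C * G.card) := Finset.sum_le_sum bnd
      _ = C * m * ((m:ℝ) - 1) * G.card := by
          rw [Finset.sum_const, Pm_card _ _ hm, nsmul_eq_mul]; ring
  linarith [hD]

private lemma Xc_mono {n N : ℕ} (h : Fin (n * N) ≃ Fin n × Fin N) {m' m : ℕ}
    (hmm : m' ≤ m) (g : Fin n → Fin N) : Xc n N m' h g ≤ Xc n N m h g := by
  apply Finset.card_le_card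
  intro j hj
  simp only [Finset.mem_filter, Finset.mem_univ, true_and] at hj ⊢
  exact ⟨lt_of_lt_of_le hj.1 hmm, hj.2⟩

private lemma L1 {n N : ℕ} {G : Finset (Fin n → Fin N)} {C : ℝ}
    (h : Fin (n * N) ≃ Fin n × Fin N) (hN : 0 < N)
    (h1 : ∀ i j, ((G.filter fun g => g i = j).card : ℝ) * N = G.card)
    (h2 : ∀ p q : Fin n × Fin N, p ≠ q →
      ((G.filter fun g => g p.1 = p.2 ∧ g q.1 = q.2).card : ℝ) * N ^ 2 ≤ C * G.card)
    {m : ℕ} (hm1 : 1 ≤ m) (hm : m ≤ n * N) (hCm : C * ((m:ℝ) - 1) ≤ N) :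
    (m : ℝ) * G.card ≤ ((G.filter fun g => 1 ≤ Xc n N m h g).card : ℝ) * (2 * N) := by
  have ha : ((G.filter fun g => 1 ≤ Xc n N m h g).card : ℝ)
      = ∑ g ∈ G, (if 1 ≤ Xc n N m h g then (1:ℝ) else 0) := (Finset.sum_boole _ _).symm
  have hlow : ∑ g ∈ G, (3 * (Xc n N m h g : ℝ) - (Xc n N m h g : ℝ)^2) / 2
      ≤ ∑ g ∈ G, (if 1 ≤ Xc n N m h g then (1:ℝ) else 0) :=
    Finset.sum_le_sum fun g _ => ite_ge _
  have hsplit : ∑ g ∈ G, (3 * (Xc n N m h g : ℝ) - (Xc n N m h g : ℝ)^2) / 2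
      = (3 * (∑ g ∈ G, (Xc n N m h g : ℝ)) - ∑ g ∈ G, (Xc n N m h g : ℝ)^2) / 2 := by
    conv_rhs => rw [Finset.mul_sum, ← Finset.sum_sub_distrib, Finset.sum_div]
  have hA := momentA h h1 hm
  have hB := momentB h h1 h2 hm1 hm
  have hNpos : (0:ℝ) < N := by exact_mod_cast hN
  have hgc : (0:ℝ) ≤ G.card := Nat.cast_nonneg _
  have hmr : (0:ℝ) ≤ (m:ℝ) := Nat.cast_nonneg _
  set a := ((G.filter fun g => 1 ≤ Xc n N m h g).card : ℝ) with hadef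
  set SX := ∑ g ∈ G, (Xc n N m h g : ℝ)
  set SXX := ∑ g ∈ G, (Xc n N m h g : ℝ)^2
  rw [← ha] at hlow
  rw [hsplit] at hlow
  -- hlow : (3*SX - SXX)/2 ≤ a ; hA : SX*N = m*g ; hB : SXX*N² ≤ m*g*N + C*m*(m-1)*g
  have key : C * m * ((m:ℝ) - 1) * G.card ≤ (m:ℝ) * G.card * N := by
    have := mul_le_mul_of_nonneg_left hCm (mul_nonneg hmr hgc)
    nlinarith
  nlinarith [mul_le_mul_of_nonneg_right hlow (le_of_lt (by positivity : (0:ℝ) < 2 * N^2)),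
    sq_nonneg ((N:ℝ)), mul_pos hNpos hNpos]

set_option maxHeartbeats 1000000 in
private lemma L2 {n N : ℕ} {G : Finset (Fin n → Fin N)} {C : ℝ}
    (h : Fin (n * N) ≃ Fin n × Fin N) (hN : 0 < N) (hC : 1 ≤ C) (hGpos : 0 < G.card)
    (h1 : ∀ i j, ((G.filter fun g => g i = j).card : ℝ) * N = G.card)
    (h2 : ∀ p q : Fin n × Fin N, p ≠ q →
      ((G.filter fun g => g p.1 = p.2 ∧ g q.1 = q.2).card : ℝ) * N ^ 2 ≤ C * G.card)
    {k m : ℕ} (hk : 1 ≤ k) (hkm : 2 * k * N ≤ m) (hm : m ≤ n * N) :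
    (G.card : ℝ) ≤ ((G.filter fun g => k ≤ Xc n N m h g).card : ℝ) * (2 + 4 * C) := by
  classical
  have hm1 : 1 ≤ m := le_trans (by nlinarith) hkm
  have hA := momentA h h1 hm
  have hB := momentB h h1 h2 hm1 hm
  have hNpos : (0:ℝ) < N := by exact_mod_cast hN
  have hgc : (0:ℝ) < G.card := by exact_mod_cast hGpos
  have hmr : (0:ℝ) < (m:ℝ) := by exact_mod_cast hm1
  set A := G.filter (fun g => k ≤ Xc n N m h g) with hAdef
  -- split sum
  have hsplit : ∑ g ∈ A, (Xc n N m h g : ℝ) + ∑ g ∈ G.filter (fun g => ¬ k ≤ Xc n N m h g),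
      (Xc n N m h g : ℝ) = ∑ g ∈ G, (Xc n N m h g : ℝ) :=
    Finset.sum_filter_add_sum_filter_not G _ _
  have hcompl : ∑ g ∈ G.filter (fun g => ¬ k ≤ Xc n N m h g), (Xc n N m h g : ℝ)
      ≤ (k:ℝ) * G.card := by
    calc ∑ g ∈ G.filter (fun g => ¬ k ≤ Xc n N m h g), (Xc n N m h g : ℝ)
        ≤ ∑ _g ∈ G.filter (fun g => ¬ k ≤ Xc n N m h g), (k:ℝ) := by
          refine Finset.sum_le_sum fun g hg => ?_
          have := (Finset.mem_filter.mp hg).2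
          exact_mod_cast le_of_lt (Nat.lt_of_not_le this)
      _ = ((G.filter (fun g => ¬ k ≤ Xc n N m h g)).card : ℝ) * k := by
          rw [Finset.sum_const, nsmul_eq_mul]
      _ ≤ (k:ℝ) * G.card := by
          have : ((G.filter (fun g => ¬ k ≤ Xc n N m h g)).card : ℝ) ≤ (G.card : ℝ) := by
            exact_mod_cast Finset.card_filter_le _ _
          nlinarith [Nat.cast_nonneg (α := ℝ) k]
  -- lower bound on ∑_A X : 2 * N * ∑_A X ≥ m * G.card
  have hkN : (k:ℝ) * N * 2 ≤ (m:ℝ) := by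
    have : ((2 * k * N : ℕ) : ℝ) ≤ (m:ℝ) := by exact_mod_cast hkm
    push_cast at this; linarith
  have hSA : (m:ℝ) * G.card ≤ 2 * N * ∑ g ∈ A, (Xc n N m h g : ℝ) := by
    nlinarith [hsplit, hcompl, hA]
  have hSAnn : (0:ℝ) ≤ ∑ g ∈ A, (Xc n N m h g : ℝ) :=
    Finset.sum_nonneg fun g _ => Nat.cast_nonneg _
  -- Cauchy-Schwarz
  have hCS : (∑ g ∈ A, (Xc n N m h g : ℝ))^2
      ≤ (A.card : ℝ) * ∑ g ∈ G, (Xc n N m h g : ℝ)^2 := by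
    have := Finset.sum_mul_sq_le_sq_mul_sq A (fun _ => (1:ℝ)) (fun g => (Xc n N m h g : ℝ))
    simp only [one_mul, one_pow] at this
    rw [Finset.sum_const, nsmul_eq_mul, mul_one] at this
    refine this.trans ?_
    refine mul_le_mul_of_nonneg_left ?_ (Nat.cast_nonneg _)
    exact Finset.sum_le_sum_of_subset_of_nonneg (Finset.filter_subset _ _)
      (fun g _ _ => sq_nonneg _)
  set a := (A.card : ℝ) with hadef
  have hann : (0:ℝ) ≤ a := Nat.cast_nonneg _
  -- combine: m²g² ≤ 4N² (Σ_A X)² ≤ 4N² a ΣXX ≤ 4a(mgN + C m (m-1) g) ≤ 4a(mgN + C m² g)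
  have hmain : (m:ℝ)^2 * (G.card:ℝ)^2 ≤ 4 * a * ((m:ℝ) * G.card * N + C * (m:ℝ)^2 * G.card) := by
    have h4 : (m:ℝ)^2 * (G.card:ℝ)^2 ≤ 4 * N^2 * (∑ g ∈ A, (Xc n N m h g : ℝ))^2 := by
      nlinarith [hSA, mul_le_mul_of_nonneg_left hSA (le_of_lt hmr), hgc]
    have h5 : 4 * N^2 * (∑ g ∈ A, (Xc n N m h g : ℝ))^2
        ≤ 4 * N^2 * ((A.card : ℝ) * ∑ g ∈ G, (Xc n N m h g : ℝ)^2) :=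
      mul_le_mul_of_nonneg_left hCS (by positivity)
    have h6 : 4 * N^2 * ((A.card : ℝ) * ∑ g ∈ G, (Xc n N m h g : ℝ)^2)
        ≤ 4 * a * ((m:ℝ) * G.card * N + C * (m:ℝ)^2 * G.card) := by
      have h7 : ((∑ g ∈ G, (Xc n N m h g : ℝ)^2)) * N^2
          ≤ (m:ℝ) * G.card * N + C * (m:ℝ)^2 * G.card := by
        refine hB.trans ?_
        have hC0 : (0:ℝ) ≤ C := by linarith
        have : C * (m:ℝ) * ((m:ℝ) - 1) * G.card ≤ C * (m:ℝ)^2 * G.card := by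
          nlinarith [mul_nonneg (mul_nonneg hC0 hmr.le) hgc.le]
        linarith
      have h8 := mul_le_mul_of_nonneg_left h7 (by positivity : (0:ℝ) ≤ 4 * a)
      calc 4 * (N:ℝ)^2 * ((A.card : ℝ) * ∑ g ∈ G, (Xc n N m h g : ℝ)^2)
          = 4 * a * ((∑ g ∈ G, (Xc n N m h g : ℝ)^2) * (N:ℝ)^2) := by rw [hadef]; ring
        _ ≤ _ := h8
    linarith
  have h2N : 2 * (N:ℝ) ≤ (m:ℝ) := by
    have hk1 : (1:ℝ) ≤ (k:ℝ) := by exact_mod_cast hk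
    nlinarith
  have t1 : 4 * a * (m:ℝ) * (G.card:ℝ) * N ≤ 2 * a * (m:ℝ)^2 * (G.card:ℝ) := by
    nlinarith [mul_le_mul_of_nonneg_left h2N (by positivity : (0:ℝ) ≤ 2 * a * (m:ℝ) * (G.card:ℝ))]
  have hfin : (m:ℝ)^2 * (G.card:ℝ) * (G.card:ℝ)
      ≤ (m:ℝ)^2 * (G.card:ℝ) * (a * (2 + 4*C)) := by nlinarith [hmain, t1]
  have hpos : (0:ℝ) < (m:ℝ)^2 * (G.card:ℝ) := by positivity
  exact (mul_le_mul_iff_right₀ hpos).mp hfin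


set_option maxHeartbeats 1000000


/-- Lemma 3.3: comparison of the distribution of `X_m` with that of `X_{ℓN}`:
`P(X_m ≥ 1) ≥ min{m/(2N), 1/(2C_G)} · P(X_{ℓN} ≥ 1)` for `1 ≤ m ≤ nN`, and
`P(X_m ≥ k) ≥ P(X_{ℓN} ≥ k)/(2+4C_G)` for `2kN ≤ m ≤ nN`. -/
theorem stmt4 (n N ℓ : ℕ) (hℓ : ℓ ≤ n)
    (G : Finset (Fin n → Fin N)) (hG : G.Nonempty)
    (C : ℝ) (hC : 1 ≤ C)
    (h : Fin (n * N) ≃ Fin n × Fin N)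
    (h1 : ∀ i : Fin n, ∀ j : Fin N,
      ((G.filter fun g => g i = j).card : ℝ) / G.card = 1 / N)
    (h2 : ∀ p q : Fin n × Fin N, p ≠ q →
      ((G.filter fun g => g p.1 = p.2 ∧ g q.1 = q.2).card : ℝ) / G.card
        ≤ C / (N : ℝ) ^ 2)
    (X : ℕ → (Fin n → Fin N) → ℕ)
    (hX : ∀ m g, X m g =
      (Finset.univ.filter fun j : Fin (n * N) => j.val < m ∧ g (h j).1 = (h j).2).card) :
    (∀ m : ℕ, 1 ≤ m → m ≤ n * N →
      ((G.filter fun g => 1 ≤ X m g).card : ℝ) / G.card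
        ≥ min ((m : ℝ) / (2 * N)) (1 / (2 * C)) *
          (((G.filter fun g => 1 ≤ X (ℓ * N) g).card : ℝ) / G.card)) ∧
    (∀ k m : ℕ, 2 * k * N ≤ m → m ≤ n * N →
      ((G.filter fun g => k ≤ X m g).card : ℝ) / G.card
        ≥ (((G.filter fun g => k ≤ X (ℓ * N) g).card : ℝ) / G.card) / (2 + 4 * C)) := by
  classical
  have hXc : ∀ m g, X m g = Xc n N m h g := fun m g => by rw [hX]; rfl
  have hGpos : 0 < G.card := Finset.card_pos.mpr hG
  have hgc : (0:ℝ) < G.card := by exact_mod_cast hGpos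
  have hCpos : (0:ℝ) < C := by linarith
  rcases Nat.eq_zero_or_pos (n * N) with hnN | hnN
  · constructor
    · intro m hm1 hm2; omega
    · intro k m hkm hm2
      have hm0 : m = 0 := by omega
      have hl0 : ℓ * N = 0 := by
        have : ℓ * N ≤ n * N := Nat.mul_le_mul_right N hℓ
        omega
      subst hm0
      rw [hl0, ge_iff_le]
      exact div_le_self (by positivity) (by linarith)
  · -- main case
    have hN : 0 < N := by
      rcases Nat.eq_zero_or_pos N with h0 | h0
      · subst h0; simp at hnN
      · exact h0
    have hNr : (0:ℝ) < N := by exact_mod_cast hN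
    have h1' : ∀ i j, ((G.filter fun g => g i = j).card : ℝ) * N = G.card := by
      intro i j
      have := h1 i j
      rw [div_eq_div_iff hgc.ne' hNr.ne'] at this
      linarith
    have h2' : ∀ p q : Fin n × Fin N, p ≠ q →
        ((G.filter fun g => g p.1 = p.2 ∧ g q.1 = q.2).card : ℝ) * N ^ 2 ≤ C * G.card := by
      intro p q hpq
      have := h2 p q hpq
      rw [div_le_div_iff₀ hgc (by positivity)] at this
      linarith
    have hple : ∀ (k m : ℕ), ((G.filter fun g => k ≤ Xc n N m h g).card : ℝ) ≤ G.card := by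
      intro k m
      exact_mod_cast Finset.card_filter_le _ _
    constructor
    · -- part 1
      intro m hm1 hm2
      simp only [hXc]
      rw [ge_iff_le]
      have hb1 : ((G.filter fun g => 1 ≤ Xc n N (ℓ * N) h g).card : ℝ) / G.card ≤ 1 :=
        (div_le_one hgc).mpr (hple 1 (ℓ * N))
      have hb0 : (0:ℝ) ≤ ((G.filter fun g => 1 ≤ Xc n N (ℓ * N) h g).card : ℝ) / G.card := by
        positivity
      rcases le_or_gt (C * m) (N:ℝ) with hcase | hcase
      · -- min ≤ m/(2N), and m/(2N) ≤ a/g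
        have hCm : C * ((m:ℝ) - 1) ≤ N := by
          have : C * ((m:ℝ) - 1) ≤ C * m := by
            have : (0:ℝ) ≤ C := le_of_lt hCpos
            nlinarith
          linarith
        have hL1 := L1 h hN h1' h2' hm1 hm2 hCm
        calc min ((m : ℝ) / (2 * N)) (1 / (2 * C)) *
              (((G.filter fun g => 1 ≤ Xc n N (ℓ * N) h g).card : ℝ) / G.card)
            ≤ ((m : ℝ) / (2 * N)) * 1 := by
              apply mul_le_mul (min_le_left _ _) hb1 hb0 (by positivity)
          _ = (m : ℝ) / (2 * N) := mul_one _
          _ ≤ ((G.filter fun g => 1 ≤ Xc n N m h g).card : ℝ) / G.card := by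
              rw [div_le_div_iff₀ (by positivity) hgc]
              linarith [hL1]
      · -- min ≤ 1/(2C)
        set m' : ℕ := ⌊(N:ℝ)/C⌋₊ + 1 with hm'def
        have hm'1 : 1 ≤ m' := Nat.le_add_left 1 _
        have hm'm : m' ≤ m := by
          have hfl : ((⌊(N:ℝ)/C⌋₊ : ℝ)) < (m:ℝ) := by
            calc ((⌊(N:ℝ)/C⌋₊ : ℝ)) ≤ (N:ℝ)/C := Nat.floor_le (by positivity)
              _ < m := by rw [div_lt_iff₀ hCpos]; nlinarith
          have : ⌊(N:ℝ)/C⌋₊ < m := by exact_mod_cast hfl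
          omega
        have hCm' : C * ((m':ℝ) - 1) ≤ N := by
          have : ((m':ℝ)) - 1 = (⌊(N:ℝ)/C⌋₊ : ℝ) := by
            rw [hm'def]; push_cast; ring
          rw [this]
          calc C * (⌊(N:ℝ)/C⌋₊ : ℝ) ≤ C * ((N:ℝ)/C) :=
              mul_le_mul_of_nonneg_left (Nat.floor_le (by positivity)) (le_of_lt hCpos)
            _ = N := by field_simp
        have hL1 := L1 h hN h1' h2' hm'1 (le_trans hm'm hm2) hCm'
        have hmono : ((G.filter fun g => 1 ≤ Xc n N m' h g).card : ℝ)
            ≤ ((G.filter fun g => 1 ≤ Xc n N m h g).card : ℝ) := by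
          have : (G.filter fun g => 1 ≤ Xc n N m' h g) ⊆ (G.filter fun g => 1 ≤ Xc n N m h g) := by
            intro g hg
            rw [Finset.mem_filter] at hg ⊢
            exact ⟨hg.1, le_trans hg.2 (Xc_mono h hm'm g)⟩
          exact_mod_cast Finset.card_le_card this
        have hNC : (N:ℝ) / C < (m':ℝ) := by
          rw [hm'def]; push_cast; exact Nat.lt_floor_add_one _
        calc min ((m : ℝ) / (2 * N)) (1 / (2 * C)) *
              (((G.filter fun g => 1 ≤ Xc n N (ℓ * N) h g).card : ℝ) / G.card)
            ≤ (1 / (2 * C)) * 1 := by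
              apply mul_le_mul (min_le_right _ _) hb1 hb0 (by positivity)
          _ = 1 / (2 * C) := mul_one _
          _ ≤ ((G.filter fun g => 1 ≤ Xc n N m' h g).card : ℝ) / G.card := by
              rw [div_le_div_iff₀ (by positivity) hgc]
              have hNCm' : (N:ℝ) < C * m' := by
                rw [div_lt_iff₀ hCpos] at hNC; linarith [hNC]
              nlinarith [hL1]
          _ ≤ ((G.filter fun g => 1 ≤ Xc n N m h g).card : ℝ) / G.card := by
              gcongr
    · -- part 2
      intro k m hkm hm2
      simp only [hXc]
      rw [ge_iff_le]
      rcases Nat.eq_zero_or_pos k with hk0 | hk1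
      · subst hk0
        have hfull : (G.filter fun g => 0 ≤ Xc n N m h g) = G :=
          Finset.filter_true_of_mem fun g _ => Nat.zero_le _
        rw [hfull, div_self (ne_of_gt hgc)]
        have : ((G.filter fun g => 0 ≤ Xc n N (ℓ * N) h g).card : ℝ) / G.card ≤ 1 :=
          (div_le_one hgc).mpr (hple 0 (ℓ * N))
        rw [div_le_one (by linarith)]
        linarith
      · have hL2 := L2 h hN hC hGpos h1' h2' hk1 hkm hm2
        have hb1 : ((G.filter fun g => k ≤ Xc n N (ℓ * N) h g).card : ℝ) / G.card ≤ 1 :=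
          (div_le_one hgc).mpr (hple k (ℓ * N))
        calc ((G.filter fun g => k ≤ Xc n N (ℓ * N) h g).card : ℝ) / G.card / (2 + 4 * C)
            ≤ 1 / (2 + 4 * C) := by
              rw [div_le_div_iff₀ (by linarith) (by linarith : (0:ℝ) < 2 + 4 * C)]
              nlinarith [hb1]
          _ ≤ ((G.filter fun g => k ≤ Xc n N m h g).card : ℝ) / G.card := by
              rw [div_le_div_iff₀ (by linarith) hgc]
              linarith [hL2]
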